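/- Let G be a finite connected weighted graph with more than one vertex, L its Laplacian with first nonzero eigenvalue λ₁, and Ψ(f) = ⟨f, ψ⟩ a linear functional given by ψ ∈ ℓ²(G) with Ψ(χ_G) ≠ 0, where χ_G is the all-ones function. Then for every f with Ψ(f) = 0 one has ‖f‖² ≤ (θ/λ₁) ‖∇f‖², where θ = |G| ‖ψ‖² / |Ψ(χ_G)|² and |G| is the number of vertices. -/

import Mathlib

open Finset

noncomputable def lap {V : Type*} [Fintype V] (w : V → V → ℝ) (f : V → ℂ) : V → ℂ :=
  fun v => ∑ u, (f v - f u) * (w v u : ℂ)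

noncomputable def gip {V : Type*} [Fintype V] (f g : V → ℂ) : ℂ :=
  ∑ v, f v * (starRingEnd ℂ) (g v)

noncomputable def gradSq {V : Type*} [Fintype V] (w : V → V → ℝ) (f : V → ℂ) : ℝ :=
  (1 / 2) * ∑ u, ∑ v, ‖f u - f v‖ ^ 2 * w u v

noncomputable def normSq {V : Type*} [Fintype V] (f : V → ℂ) : ℝ := ∑ v, ‖f v‖ ^ 2

/-- `μ` is an eigenvalue of the weighted graph Laplacian. -/
def IsEigen {V : Type*} [Fintype V] (w : V → V → ℝ) (μ : ℝ) : Prop :=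
  ∃ g : V → ℂ, g ≠ 0 ∧ lap w g = fun v => (μ : ℂ) * g v

section Aux
variable {V : Type*} [Fintype V] (w : V → V → ℝ)

lemma sum_swap_w (hsym : ∀ u v, w u v = w v u) (F : V → V → ℂ) :
    ∑ v, ∑ u, (w v u : ℂ) * F v u = ∑ v, ∑ u, (w v u : ℂ) * F u v := by
  rw [Finset.sum_comm]
  refine Finset.sum_congr rfl fun v _ => Finset.sum_congr rfl fun u _ => by rw [hsym]

lemma gip_lap (hsym : ∀ u v, w u v = w v u) (f : V → ℂ) :
    gip (lap w f) f = (gradSq w f : ℂ) := by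
  have key : (2 : ℂ) * gip (lap w f) f =
      ∑ v, ∑ u, (w v u : ℂ) * ((f v - f u) * (starRingEnd ℂ) (f v - f u)) := by
    have h1 : gip (lap w f) f = ∑ v, ∑ u, (w v u : ℂ) * ((f v - f u) * (starRingEnd ℂ) (f v)) := by
      simp only [gip, lap, Finset.sum_mul]
      exact Finset.sum_congr rfl fun v _ => Finset.sum_congr rfl fun u _ => by ring
    have h2 : gip (lap w f) f = ∑ v, ∑ u, (w v u : ℂ) * ((f u - f v) * (starRingEnd ℂ) (f u)) := by
      rw [h1, sum_swap_w w hsym (fun v u => (f v - f u) * (starRingEnd ℂ) (f v))]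
    rw [two_mul]
    nth_rewrite 1 [h1]
    rw [h2, ← Finset.sum_add_distrib]
    refine Finset.sum_congr rfl fun v _ => ?_
    rw [← Finset.sum_add_distrib]
    refine Finset.sum_congr rfl fun u _ => ?_
    simp only [map_sub]
    ring
  have key2 : ∀ v u : V, (w v u : ℂ) * ((f v - f u) * (starRingEnd ℂ) (f v - f u)) =
      ((‖f v - f u‖ ^ 2 * w v u : ℝ) : ℂ) := by
    intro v u
    rw [Complex.mul_conj']
    push_cast
    ring
  simp only [key2] at key
  have : (2 : ℂ) * gip (lap w f) f = ((2 * gradSq w f : ℝ) : ℂ) := by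
    rw [key]
    rw [gradSq]
    push_cast
    ring
  have h2 : (2 : ℂ) ≠ 0 := by norm_num
  field_simp at this
  push_cast at this
  exact mul_left_cancel₀ h2 this
end Aux

section Aux2
variable {V : Type*} [Fintype V] (w : V → V → ℝ)

lemma gradSq_nonneg (hnn : ∀ u v, 0 ≤ w u v) (f : V → ℂ) : 0 ≤ gradSq w f := by
  apply mul_nonneg (by norm_num)
  refine Finset.sum_nonneg fun u _ => Finset.sum_nonneg fun v _ => ?_
  exact mul_nonneg (by positivity) (hnn u v)

lemma gip_self (f : V → ℂ) : gip f f = (normSq f : ℂ) := by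
  rw [gip, normSq]
  push_cast
  exact Finset.sum_congr rfl fun v _ => (Complex.mul_conj' (f v))

lemma normSq_pos (f : V → ℂ) (hf : f ≠ 0) : 0 < normSq f := by
  obtain ⟨v, hv⟩ : ∃ v, f v ≠ 0 := by
    by_contra h
    push_neg at h
    exact hf (funext h)
  refine Finset.sum_pos' (fun u _ => by positivity) ⟨v, Finset.mem_univ v, pow_pos (norm_pos_iff.mpr hv) 2⟩

lemma const_of_gradSq_zero (hsym : ∀ u v, w u v = w v u) (hnn : ∀ u v, 0 ≤ w u v)
    (hconn : (SimpleGraph.fromRel fun u v : V => w u v ≠ 0).Connected)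
    (g : V → ℂ) (hg : gradSq w g = 0) : ∀ u v, g u = g v := by
  have hterm : ∀ u v, ‖g u - g v‖ ^ 2 * w u v = 0 := by
    have h0 : ∑ u, ∑ v, ‖g u - g v‖ ^ 2 * w u v = 0 := by
      have := hg
      rw [gradSq] at this
      linarith
    intro u v
    have h1 := (Finset.sum_eq_zero_iff_of_nonneg
      (fun u _ => Finset.sum_nonneg fun v _ => mul_nonneg (by positivity) (hnn u v))).mp h0
      u (Finset.mem_univ u)
    exact (Finset.sum_eq_zero_iff_of_nonneg
      (fun v _ => mul_nonneg (by positivity) (hnn u v))).mp h1 v (Finset.mem_univ v)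
  have hstep : ∀ u v, w u v ≠ 0 → g u = g v := by
    intro u v hw
    have := hterm u v
    have h2 : ‖g u - g v‖ ^ 2 = 0 := by
      rcases mul_eq_zero.mp this with h | h
      · exact h
      · exact absurd h hw
    exact sub_eq_zero.mp (norm_eq_zero.mp ((pow_eq_zero_iff two_ne_zero).mp h2))
  have hadj : ∀ u v, (SimpleGraph.fromRel fun u v : V => w u v ≠ 0).Adj u v → g u = g v := by
    intro u v huv
    rw [SimpleGraph.fromRel_adj] at huv
    rcases huv.2 with h | h
    · exact hstep u v h
    · exact (hstep v u h).symm
  intro u v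
  obtain ⟨p⟩ := hconn.preconnected u v
  induction p with
  | nil => rfl
  | cons h p ih => exact (hadj _ _ h).trans ih
end Aux2

section Spec
variable {V : Type*} [Fintype V] (w : V → V → ℝ)

lemma lap_symm (hsym : ∀ u v, w u v = w v u) (x y : V → ℂ) :
    ∑ v, (starRingEnd ℂ) (lap w x v) * y v = ∑ v, (starRingEnd ℂ) (x v) * lap w y v := by
  have swap := sum_swap_w w hsym (fun v u => (starRingEnd ℂ) (x u) * y v)
  have hL : ∑ v, (starRingEnd ℂ) (lap w x v) * y v
      = (∑ v, ∑ u, (w v u : ℂ) * ((starRingEnd ℂ) (x v) * y v))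
        - ∑ v, ∑ u, (w v u : ℂ) * ((starRingEnd ℂ) (x u) * y v) := by
    rw [← Finset.sum_sub_distrib]
    refine Finset.sum_congr rfl fun v _ => ?_
    rw [← Finset.sum_sub_distrib]
    simp only [lap, map_sum, Finset.sum_mul]
    refine Finset.sum_congr rfl fun u _ => ?_
    simp only [map_mul, map_sub, Complex.conj_ofReal]
    ring
  have hR : ∑ v, (starRingEnd ℂ) (x v) * lap w y v
      = (∑ v, ∑ u, (w v u : ℂ) * ((starRingEnd ℂ) (x v) * y v))
        - ∑ v, ∑ u, (w v u : ℂ) * ((starRingEnd ℂ) (x v) * y u) := by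
    rw [← Finset.sum_sub_distrib]
    refine Finset.sum_congr rfl fun v _ => ?_
    rw [← Finset.sum_sub_distrib, lap, Finset.mul_sum]
    refine Finset.sum_congr rfl fun u _ => ?_
    ring
  rw [hL, hR, swap]

noncomputable def lapOp {V : Type*} [Fintype V] (w : V → V → ℝ) :
    EuclideanSpace ℂ V →ₗ[ℂ] EuclideanSpace ℂ V where
  toFun g := WithLp.toLp 2 (lap w g)
  map_add' f g := WithLp.ofLp_injective 2 <| funext fun v => by
    show lap w (f + g) v = lap w f v + lap w g v
    simp only [lap, PiLp.add_apply, Pi.add_apply, ← Finset.sum_add_distrib]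
    exact Finset.sum_congr rfl fun u _ => by ring
  map_smul' c f := WithLp.ofLp_injective 2 <| funext fun v => by
    show lap w (c • f) v = c * lap w f v
    simp only [lap, PiLp.smul_apply, Pi.smul_apply, smul_eq_mul, Finset.mul_sum]
    exact Finset.sum_congr rfl fun u _ => by ring

lemma lapOp_apply (g : V → ℂ) : (lapOp w (WithLp.toLp 2 g) : V → ℂ) = lap w g := rfl

lemma inner_euclidean (x y : EuclideanSpace ℂ V) :
    (inner ℂ x y : ℂ) = ∑ v, (starRingEnd ℂ) (x v) * y v := by
  simp [PiLp.inner_apply, RCLike.inner_apply]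
  exact Finset.sum_congr rfl fun v _ => mul_comm _ _

lemma lapOp_isSymm (hsym : ∀ u v, w u v = w v u) : (lapOp w).IsSymmetric := by
  intro x y
  rw [inner_euclidean, inner_euclidean]
  exact lap_symm w hsym x y
end Spec

section Gap
variable {V : Type*} [Fintype V] (w : V → V → ℝ)

lemma spectral_gap (hsym : ∀ u v, w u v = w v u) (hnn : ∀ u v, 0 ≤ w u v)
    (hconn : (SimpleGraph.fromRel fun u v : V => w u v ≠ 0).Connected)
    (lam1 : ℝ) (hlam : IsLeast {μ : ℝ | μ ≠ 0 ∧ IsEigen w μ} lam1)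
    (g : V → ℂ) (hg : ∑ v, g v = 0) : lam1 * normSq g ≤ gradSq w g := by
  have hne : Nonempty V := hconn.nonempty
  have hT := lapOp_isSymm w hsym
  have hn : Module.finrank ℂ (EuclideanSpace ℂ V) = Fintype.card V := finrank_euclideanSpace
  set b := hT.eigenvectorBasis hn with hb
  set μ := hT.eigenvalues hn with hμ
  have happly : ∀ i, lapOp w (b i) = (μ i : ℂ) • b i := hT.apply_eigenvectorBasis hn
  set g' : EuclideanSpace ℂ V := WithLp.toLp 2 g with hg'
  set c : EuclideanSpace ℂ (Fin (Fintype.card V)) := b.repr g' with hc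
  -- inner products via repr
  have hinner : ∀ x y : EuclideanSpace ℂ V,
      (inner ℂ x y : ℂ) = ∑ i, (starRingEnd ℂ) (b.repr x i) * (b.repr y i) := by
    intro x y
    rw [← b.repr.inner_map_map x y, inner_euclidean]
  have keyT : (gradSq w g : ℂ) = ∑ i, ((μ i * ‖c i‖ ^ 2 : ℝ) : ℂ) := by
    have h1 : (inner ℂ g' (lapOp w g') : ℂ) = (gradSq w g : ℂ) := by
      rw [inner_euclidean, ← gip_lap w hsym g, gip]
      exact Finset.sum_congr rfl fun v _ => by rw [mul_comm]; rfl
    rw [← h1, hinner]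
    refine Finset.sum_congr rfl fun i _ => ?_
    rw [hT.eigenvectorBasis_apply_self_apply hn g' i]
    rw [← hc, ← hμ]
    rw [mul_left_comm, mul_comm ((starRingEnd ℂ) (c i)), Complex.mul_conj']
    push_cast
    rfl
  have keyN : (normSq g : ℂ) = ∑ i, ((‖c i‖ ^ 2 : ℝ) : ℂ) := by
    have h1 : (inner ℂ g' g' : ℂ) = (normSq g : ℂ) := by
      rw [inner_euclidean, normSq]
      push_cast
      refine Finset.sum_congr rfl fun v _ => ?_
      rw [mul_comm, Complex.mul_conj']
    rw [← h1, hinner]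
    refine Finset.sum_congr rfl fun i _ => ?_
    rw [← hc, mul_comm, Complex.mul_conj']
    push_cast
    ring
  have keyT' : gradSq w g = ∑ i, μ i * ‖c i‖ ^ 2 := by
    rw [← Complex.ofReal_sum] at keyT
    exact_mod_cast keyT
  have keyN' : normSq g = ∑ i, ‖c i‖ ^ 2 := by
    rw [← Complex.ofReal_sum] at keyN
    exact_mod_cast keyN
  -- zero eigenvalue implies coefficient vanishes
  have key0 : ∀ i, μ i = 0 → c i = 0 := by
    intro i h0
    have hlap0 : lap w (b i) = fun _ => (0 : ℂ) := by
      have := happly i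
      rw [h0] at this
      funext v
      have := congrFun (congrArg (fun x : EuclideanSpace ℂ V => (x : V → ℂ)) this) v
      simpa [lapOp] using this
    have hgrad0 : gradSq w (b i) = 0 := by
      have := gip_lap w hsym (b i)
      rw [hlap0] at this
      simp only [gip, zero_mul, Finset.sum_const_zero] at this
      exact_mod_cast this.symm
    have hconst := const_of_gradSq_zero w hsym hnn hconn (b i) hgrad0
    obtain ⟨v₀⟩ := hne
    have : c i = (starRingEnd ℂ) (b i v₀) * ∑ v, g v := by
      rw [hc, b.repr_apply_apply, inner_euclidean, Finset.mul_sum]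
      exact Finset.sum_congr rfl fun v _ => by rw [hconst v v₀]
    rw [this, hg, mul_zero]
  -- nonzero eigenvalues are ≥ lam1
  have key1 : ∀ i, μ i ≠ 0 → lam1 ≤ μ i := by
    intro i h0
    refine hlam.2 ⟨h0, ⟨b i, ?_, ?_⟩⟩
    · have := (hT.eigenvectorBasis hn).toBasis.ne_zero i
      simpa [hb] using this
    · funext v
      have := congrFun (congrArg (fun x : EuclideanSpace ℂ V => (x : V → ℂ)) (happly i)) v
      simpa [lapOp, PiLp.smul_apply, smul_eq_mul] using this
  rw [keyT', keyN', Finset.mul_sum]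
  refine Finset.sum_le_sum fun i _ => ?_
  by_cases hci : c i = 0
  · simp [hci]
  · by_cases h0 : μ i = 0
    · exact absurd (key0 i h0) hci
    · exact mul_le_mul_of_nonneg_right (key1 i h0) (by positivity)
end Gap

section Main
variable {V : Type*} [Fintype V]

noncomputable def toE {V : Type*} [Fintype V] (x : V → ℂ) : EuclideanSpace ℂ V := WithLp.toLp 2 x

lemma norm_euclid_sq (x : V → ℂ) : ‖toE x‖ ^ 2 = normSq x := by
  rw [EuclideanSpace.norm_eq, Real.sq_sqrt (Finset.sum_nonneg fun v _ => by positivity)]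
  rfl

lemma gip_cs (x y : V → ℂ) : ‖gip x y‖ ^ 2 ≤ normSq x * normSq y := by
  have h : gip x y = (inner ℂ (toE y) (toE x) : ℂ) := by
    rw [inner_euclidean, gip]
    exact Finset.sum_congr rfl fun v _ => (mul_comm _ _)
  calc ‖gip x y‖ ^ 2 = ‖(inner ℂ (toE y) (toE x) : ℂ)‖ ^ 2 := by
        rw [h]
    _ ≤ (‖(toE y)‖ * ‖(toE x)‖) ^ 2 :=
        pow_le_pow_left₀ (norm_nonneg _) (norm_inner_le_norm _ _) 2
    _ = normSq x * normSq y := by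
        rw [mul_pow, norm_euclid_sq, norm_euclid_sq]; ring

lemma gip_add_const (x ψ : V → ℂ) (aa : ℂ) :
    gip (fun v => x v + aa) ψ = gip x ψ + aa * gip (fun _ => 1) ψ := by
  unfold gip
  rw [Finset.mul_sum, ← Finset.sum_add_distrib]
  exact Finset.sum_congr rfl fun v _ => by ring

lemma gip_sub_const_right (x ψ : V → ℂ) (t : ℂ) :
    gip x (fun v => ψ v - t) = gip x ψ - (starRingEnd ℂ) t * ∑ v, x v := by
  unfold gip
  rw [Finset.mul_sum, ← Finset.sum_sub_distrib]
  refine Finset.sum_congr rfl fun v _ => ?_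
  simp only [map_sub]
  ring

lemma gip_expand (x : V → ℂ) (aa : ℂ) (hx : ∑ v, x v = 0) :
    gip (fun v => x v + aa) (fun v => x v + aa)
      = gip x x + (Fintype.card V : ℂ) * (aa * (starRingEnd ℂ) aa) := by
  unfold gip
  have hterm : ∀ v, (x v + aa) * (starRingEnd ℂ) (x v + aa)
      = x v * (starRingEnd ℂ) (x v)
        + (x v * (starRingEnd ℂ) aa + aa * (starRingEnd ℂ) (x v) + aa * (starRingEnd ℂ) aa) := by
    intro v; simp only [map_add]; ring
  simp_rw [hterm]
  rw [Finset.sum_add_distrib, Finset.sum_add_distrib, Finset.sum_add_distrib,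
    ← Finset.sum_mul, ← Finset.mul_sum, hx, ← map_sum, hx]
  simp [Finset.card_univ, Finset.mul_sum]

lemma lam1_pos (w : V → V → ℝ) (hsym : ∀ u v, w u v = w v u) (hnn : ∀ u v, 0 ≤ w u v)
    (lam1 : ℝ) (hlam : IsLeast {μ : ℝ | μ ≠ 0 ∧ IsEigen w μ} lam1) : 0 < lam1 := by
  obtain ⟨hne0, g, hg0, hge⟩ := hlam.1
  have h1 : gip (lap w g) g = (gradSq w g : ℂ) := gip_lap w hsym g
  have h2 : gip (lap w g) g = (lam1 : ℂ) * (normSq g : ℂ) := by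
    rw [hge, ← gip_self]
    unfold gip
    rw [Finset.mul_sum]
    exact Finset.sum_congr rfl fun v _ => by ring
  have h3 : gradSq w g = lam1 * normSq g := by
    rw [h1] at h2
    exact_mod_cast h2
  have h4 := gradSq_nonneg w hnn g
  have h5 := normSq_pos g hg0
  rcases lt_trichotomy lam1 0 with h | h | h
  · nlinarith
  · exact absurd h hne0
  · exact h
end Main

theorem poincare_kernel_functional
    {V : Type*} [Fintype V] (w : V → V → ℝ)
    (hsym : ∀ u v, w u v = w v u) (hnn : ∀ u v, 0 ≤ w u v)
    (hdiag : ∀ v, w v v = 0)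
    (hconn : (SimpleGraph.fromRel fun u v : V => w u v ≠ 0).Connected)
    (hcard : 1 < Fintype.card V)
    (lam1 : ℝ) (hlam : IsLeast {μ : ℝ | μ ≠ 0 ∧ IsEigen w μ} lam1)
    (ψ : V → ℂ) (hψ : gip (fun _ => 1) ψ ≠ 0)
    (f : V → ℂ) (hf : gip f ψ = 0) :
    normSq f ≤
      ((Fintype.card V : ℝ) * normSq ψ / ‖gip (fun _ => (1 : ℂ)) ψ‖ ^ 2) / lam1
        * gradSq w f := by
  classical
  have hcard0 : 0 < Fintype.card V := Nat.lt_of_lt_of_le Nat.zero_lt_one hcard.le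
  set N : ℝ := (Fintype.card V : ℝ) with hNdef
  have hN0 : 0 < N := by simp only [hNdef]; exact_mod_cast hcard0
  have hNc : (Fintype.card V : ℂ) ≠ 0 := Nat.cast_ne_zero.mpr hcard0.ne'
  set s : ℂ := gip (fun _ => (1 : ℂ)) ψ with hsdef
  set S : ℝ := ‖s‖ ^ 2 with hSdef
  have hS0 : 0 < S := by
    rw [hSdef]
    exact pow_pos (norm_pos_iff.mpr hψ) 2
  set a : ℂ := (∑ v, f v) / (Fintype.card V : ℂ) with hadef
  set g : V → ℂ := fun v => f v - a with hgdef
  have hfg : ∀ v, f v = g v + a := fun v => by simp [hgdef]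
  have hsum_g : ∑ v, g v = 0 := by
    rw [hgdef]
    rw [Finset.sum_sub_distrib, Finset.sum_const, Finset.card_univ, nsmul_eq_mul, hadef]
    field_simp
    ring
  set t : ℂ := (∑ v, ψ v) / (Fintype.card V : ℂ) with htdef
  set ψ' : V → ℂ := fun v => ψ v - t with hψ'def
  have hψt : ∀ v, ψ v = ψ' v + t := fun v => by simp [hψ'def]
  have hsum_ψ' : ∑ v, ψ' v = 0 := by
    rw [hψ'def]
    rw [Finset.sum_sub_distrib, Finset.sum_const, Finset.card_univ, nsmul_eq_mul, htdef]
    field_simp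
    ring
  -- Pythagoras : normSq f = normSq g + N * ‖a‖²
  have hfeq : f = fun v => g v + a := funext hfg
  have hgipf : gip f f = gip g g + (Fintype.card V : ℂ) * (a * (starRingEnd ℂ) a) := by
    rw [hfeq, gip_expand g a hsum_g]
  have hdecomp : normSq f = normSq g + N * ‖a‖ ^ 2 := by
    have := hgipf
    rw [gip_self, gip_self, Complex.mul_conj'] at this
    have h2 : ((normSq f : ℝ) : ℂ) = ((normSq g + N * ‖a‖ ^ 2 : ℝ) : ℂ) := by
      rw [this]; simp only [hNdef]; push_cast; ring
    exact_mod_cast h2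
  -- functional relation : a * s = - gip g ψ
  have hfψ : gip g ψ + a * s = 0 := by
    rw [← hf, hsdef]
    rw [hfeq, gip_add_const]
  have hnorm_as : ‖gip g ψ‖ = ‖a‖ * ‖s‖ := by
    have : gip g ψ = -(a * s) := by linear_combination hfψ
    rw [this, norm_neg, norm_mul]
  -- gip g ψ' = gip g ψ
  have hgψ' : gip g ψ' = gip g ψ := by
    rw [hψ'def, gip_sub_const_right, hsum_g, mul_zero, sub_zero]
  -- normSq ψ' = normSq ψ - S / N
  have hsconj : s = (starRingEnd ℂ) (∑ v, ψ v) := by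
    rw [hsdef]
    unfold gip
    rw [map_sum]
    exact Finset.sum_congr rfl fun v _ => by rw [one_mul]
  have hsumψ : ∑ v, ψ v = (Fintype.card V : ℂ) * t := by
    rw [htdef]; field_simp
  have hst : ‖s‖ = N * ‖t‖ := by
    rw [hsconj, hsumψ, RCLike.norm_conj, norm_mul]
    congr 1
    simp [hNdef]
  have hψeq : ψ = fun v => ψ' v + t := funext hψt
  have hgipψ : gip ψ ψ = gip ψ' ψ' + (Fintype.card V : ℂ) * (t * (starRingEnd ℂ) t) := by
    rw [hψeq, gip_expand ψ' t hsum_ψ']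
  have hψ'norm : normSq ψ' = normSq ψ - S / N := by
    have := hgipψ
    rw [gip_self, gip_self, Complex.mul_conj'] at this
    have h2 : ((normSq ψ : ℝ) : ℂ) = ((normSq ψ' + N * ‖t‖ ^ 2 : ℝ) : ℂ) := by
      rw [this]; simp only [hNdef]; push_cast; ring
    have h3 : normSq ψ = normSq ψ' + N * ‖t‖ ^ 2 := by exact_mod_cast h2
    have h4 : N * ‖t‖ ^ 2 = S / N := by
      rw [hSdef, hst]
      field_simp
    rw [h3, h4]
    ring
  -- Cauchy-Schwarz
  have hcs : ‖a‖ ^ 2 * S ≤ normSq g * (normSq ψ - S / N) := by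
    have h1 := gip_cs g ψ'
    rw [hgψ', hnorm_as, hψ'norm] at h1
    calc ‖a‖ ^ 2 * S = (‖a‖ * ‖s‖) ^ 2 := by rw [hSdef]; ring
      _ ≤ normSq g * (normSq ψ - S / N) := h1
  -- spectral gap
  have hgrad_eq : gradSq w g = gradSq w f := by
    unfold gradSq
    congr 1
    refine Finset.sum_congr rfl fun u _ => Finset.sum_congr rfl fun v _ => ?_
    have : g u - g v = f u - f v := by rw [hgdef]; ring
    rw [this]
  have hgap : lam1 * normSq g ≤ gradSq w f := by
    rw [← hgrad_eq]
    exact spectral_gap w hsym hnn hconn lam1 hlam g hsum_g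
  have hlam1 : 0 < lam1 := lam1_pos w hsym hnn lam1 hlam
  -- final arithmetic
  set A : ℝ := ‖a‖ ^ 2 with hAdef
  set G : ℝ := normSq g with hGdef
  set P : ℝ := normSq ψ with hPdef
  have hG0 : 0 ≤ G := by
    rw [hGdef]
    exact Finset.sum_nonneg fun v _ => by positivity
  have hA0 : 0 ≤ A := by positivity
  have hstep1 : normSq f ≤ G * (N * P) / S := by
    rw [hdecomp]
    rw [le_div_iff₀ hS0]
    have h1 : N * (A * S) ≤ N * (G * (P - S / N)) :=
      mul_le_mul_of_nonneg_left hcs hN0.le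
    have h2 : N * (G * (P - S / N)) = G * (N * P) - G * S := by
      field_simp
    nlinarith [h1, h2]
  have hstep2 : G ≤ gradSq w f / lam1 := by
    rw [le_div_iff₀ hlam1]
    linarith [hgap]
  have hNP0 : 0 ≤ N * P / S := by
    have hP0 : 0 ≤ P := Finset.sum_nonneg fun v _ => by positivity
    positivity
  calc normSq f ≤ G * (N * P) / S := hstep1
    _ = (N * P / S) * G := by ring
    _ ≤ (N * P / S) * (gradSq w f / lam1) := mul_le_mul_of_nonneg_left hstep2 hNP0
    _ = ((N * P / S) / lam1) * gradSq w f := by ring
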